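/- Let 2 ≤ y < z be real numbers and, for positive integers r and n, let b_r(n) denote the number of r-tuples (p₁, …, p_r) of primes with y < p_i < z for every i and p₁⋯p_r = n. Let k ≥ 2 and s ≥ 1 be integers and let ℓ be a positive integer with Ω(ℓ) = s (where Ω counts prime factors with multiplicity). Then b_{ks}(ℓ^k) ≤ ((ks)!/(s!)^k)·(b_s(ℓ))^k. -/

import Mathlib

open scoped Classical

/-- `b_r(n)`: the number of `r`-tuples `(p₁, …, p_r)` of primes with `y < pᵢ < z` for every `i`
and `p₁ ⋯ p_r = n`. -/
noncomputable def bCount (y z : ℝ) (r n : ℕ) : ℕ :=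
  Nat.card {t : Fin r → ℕ //
    (∀ i, (t i).Prime ∧ y < (t i : ℝ) ∧ (t i : ℝ) < z) ∧ ∏ i, t i = n}

open Equiv MulAction in
lemma ofFn_perm_iff_exists {m : ℕ} (f g : Fin m → ℕ) :
    (List.ofFn f).Perm (List.ofFn g) ↔ ∃ σ : Equiv.Perm (Fin m), f = g ∘ σ := by
  constructor
  · intro h
    have h1 : f ∘ Tuple.sort f = g ∘ Tuple.sort g := by
      apply List.ofFn_injective
      exact List.Perm.eq_of_sortedLE (Tuple.monotone_sort f).sortedLE_ofFn (Tuple.monotone_sort g).sortedLE_ofFn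
        (((Tuple.sort f).ofFn_comp_perm f).trans
          (h.trans ((Tuple.sort g).ofFn_comp_perm g).symm))
    refine ⟨((Tuple.sort f)⁻¹ : Equiv.Perm (Fin m)).trans (Tuple.sort g), ?_⟩
    funext i
    have := congrFun h1 ((Tuple.sort f)⁻¹ i)
    simpa using this
  · rintro ⟨σ, rfl⟩
    exact σ.ofFn_comp_perm g

open Equiv MulAction in
lemma bCount_mul_stab (y z : ℝ) {m n : ℕ} (g : Fin m → ℕ)
    (hg1 : ∀ i, (g i).Prime ∧ y < (g i : ℝ) ∧ (g i : ℝ) < z) (hg2 : ∏ i, g i = n) :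
    bCount y z m n *
      Nat.card (stabilizer (Equiv.Perm (Fin m))ᵈᵐᵃ g) = m.factorial := by
  classical
  have hgperm : (List.ofFn g).Perm n.primeFactorsList :=
    Nat.primeFactorsList_unique (by rw [List.prod_ofFn]; exact hg2)
      (by intro p hp; obtain ⟨i, rfl⟩ := List.mem_ofFn.1 hp; exact (hg1 i).1)
  have key : ∀ t : Fin m → ℕ,
      ((∀ i, (t i).Prime ∧ y < (t i : ℝ) ∧ (t i : ℝ) < z) ∧ ∏ i, t i = n)
        ↔ t ∈ orbit (Equiv.Perm (Fin m))ᵈᵐᵃ g := by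
    intro t
    constructor
    · rintro ⟨ht1, ht2⟩
      have htperm : (List.ofFn t).Perm (List.ofFn g) := by
        refine (Nat.primeFactorsList_unique (by rw [List.prod_ofFn]; exact ht2) ?_).trans
          hgperm.symm
        intro p hp; obtain ⟨i, rfl⟩ := List.mem_ofFn.1 hp; exact (ht1 i).1
      obtain ⟨σ, rfl⟩ := (ofFn_perm_iff_exists t g).1 htperm
      exact ⟨DomMulAct.mk σ, rfl⟩
    · rintro ⟨x, rfl⟩
      set σ := DomMulAct.mk.symm x with hσ
      constructor
      · intro i; exact hg1 (σ i)
      · show ∏ i, g (σ i) = n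
        rw [Equiv.prod_comp σ g]; exact hg2
  have hb : bCount y z m n = Nat.card (orbit (Equiv.Perm (Fin m))ᵈᵐᵃ g) :=
    Nat.card_congr (Equiv.subtypeEquivRight key)
  rw [hb, ← Nat.card_prod,
    Nat.card_congr (orbitProdStabilizerEquivGroup (Equiv.Perm (Fin m))ᵈᵐᵃ g),
    Nat.card_congr (DomMulAct.mk (M := Equiv.Perm (Fin m))).symm,
    Nat.card_eq_fintype_card, Fintype.card_perm, Fintype.card_fin]

/-- Let `k ≥ 2`, `s ≥ 1` and `ℓ` a positive integer with `Ω(ℓ) = s`. Then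
`b_{ks}(ℓ^k) ≤ ((ks)!/(s!)^k) (b_s(ℓ))^k`. -/
theorem stmt_14 (y z : ℝ) (hy : 2 ≤ y) (hyz : y < z) (k s : ℕ) (hk : 2 ≤ k) (hs : 1 ≤ s)
    (ℓ : ℕ) (hℓ : 0 < ℓ) (hΩ : ℓ.primeFactorsList.length = s) :
    (bCount y z (k * s) (ℓ ^ k) : ℝ) ≤
      ((k * s).factorial : ℝ) / (s.factorial : ℝ) ^ k * (bCount y z s ℓ : ℝ) ^ k := by
  subst hΩ
  set L := ℓ.primeFactorsList with hL
  by_cases hgood : ∀ p ∈ L, y < (p : ℝ) ∧ (p : ℝ) < z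
  · -- all prime factors in range
    set g1 : Fin L.length → ℕ := L.get with hg1def
    have hg1a : ∀ i, (g1 i).Prime ∧ y < (g1 i : ℝ) ∧ (g1 i : ℝ) < z := by
      intro i
      exact ⟨Nat.prime_of_mem_primeFactorsList (L.get_mem i), hgood _ (L.get_mem i)⟩
    have hg1b : ∏ i, g1 i = ℓ := by
      rw [← List.prod_ofFn, hg1def, List.ofFn_get, hL, Nat.prod_primeFactorsList hℓ.ne']
    set e := (finProdFinEquiv : Fin k × Fin L.length ≃ Fin (k * L.length)) with he
    set gk : Fin (k * L.length) → ℕ := fun i => g1 (e.symm i).2 with hgkdef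
    have hgka : ∀ i, (gk i).Prime ∧ y < (gk i : ℝ) ∧ (gk i : ℝ) < z := fun i =>
      hg1a (e.symm i).2
    have hgkb : ∏ i, gk i = ℓ ^ k := by
      rw [← Equiv.prod_comp e gk]
      have : ∀ p : Fin k × Fin L.length, gk (e p) = g1 p.2 := by
        intro p; simp [hgkdef]
      rw [Fintype.prod_congr _ _ this, Fintype.prod_prod_type]
      simp [hg1b, Finset.prod_const]
    have h1 := bCount_mul_stab y z g1 hg1a hg1b
    have h2 := bCount_mul_stab y z gk hgka hgkb
    -- stabilizer comparison
    set T1 := MulAction.stabilizer (Equiv.Perm (Fin L.length))ᵈᵐᵃ g1 with hT1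
    set Tk := MulAction.stabilizer (Equiv.Perm (Fin (k * L.length)))ᵈᵐᵃ gk with hTk
    have hstab : Nat.card T1 ^ k ≤ Nat.card Tk := by
      have hfin : Finite (Equiv.Perm (Fin (k * L.length)))ᵈᵐᵃ :=
        Finite.of_equiv _ (DomMulAct.mk (M := Equiv.Perm (Fin (k * L.length))))
      set Φ : (Fin k → T1) → Tk := fun σ =>
        ⟨DomMulAct.mk (e.permCongr
            (Equiv.prodShear (Equiv.refl (Fin k))
              (fun a => DomMulAct.mk.symm ((σ a : (Equiv.Perm (Fin L.length))ᵈᵐᵃ))))), by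
          rw [MulAction.mem_stabilizer_iff]
          funext i
          have hs1 : ∀ (a : Fin k) (b : Fin L.length),
              g1 (DomMulAct.mk.symm ((σ a : (Equiv.Perm (Fin L.length))ᵈᵐᵃ)) b) = g1 b := by
            intro a b
            have := (σ a).2
            rw [MulAction.mem_stabilizer_iff] at this
            exact congrFun this b
          show gk (e.permCongr _ i) = gk i
          simp only [Equiv.permCongr_apply, hgkdef, Equiv.symm_apply_apply,
            Equiv.prodShear_apply, Equiv.refl_apply]
          exact hs1 _ _⟩ with hΦ
      have hinj : Function.Injective Φ := by
        intro σ σ' h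
        funext a
        apply Subtype.ext
        have h' := congrArg (fun x : Tk => DomMulAct.mk.symm ((x : (Equiv.Perm (Fin (k * L.length)))ᵈᵐᵃ))) h
        simp only [hΦ, Equiv.symm_apply_apply] at h'
        have h'' := e.permCongr.injective h'
        apply DomMulAct.mk.symm.injective
        ext b
        have := congrFun (congrArg (fun q : Equiv.Perm (Fin k × Fin L.length) => (q : _ → _)) h'')
          (a, b)
        exact congrArg Fin.val (by simpa using congrArg Prod.snd this)
      calc Nat.card T1 ^ k = Nat.card (Fin k → T1) := by
            rw [Nat.card_fun, Nat.card_eq_fintype_card (α := Fin k), Fintype.card_fin]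
        _ ≤ Nat.card Tk := Nat.card_le_card_of_injective Φ hinj
    -- arithmetic
    have hnat : bCount y z (k * L.length) (ℓ ^ k) * (L.length.factorial) ^ k ≤
        (k * L.length).factorial * bCount y z L.length ℓ ^ k := by
      calc bCount y z (k * L.length) (ℓ ^ k) * (L.length.factorial) ^ k
          = bCount y z (k * L.length) (ℓ ^ k) *
              (bCount y z L.length ℓ * Nat.card T1) ^ k := by rw [h1]
        _ = bCount y z (k * L.length) (ℓ ^ k) * Nat.card T1 ^ k *
              bCount y z L.length ℓ ^ k := by ring
        _ ≤ bCount y z (k * L.length) (ℓ ^ k) * Nat.card Tk *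
              bCount y z L.length ℓ ^ k := by
            exact Nat.mul_le_mul_right _ (Nat.mul_le_mul_left _ hstab)
        _ = (k * L.length).factorial * bCount y z L.length ℓ ^ k := by rw [h2]
    have hpos : (0 : ℝ) < (L.length.factorial : ℝ) ^ k := by positivity
    rw [div_mul_eq_mul_div, le_div_iff₀ hpos]
    calc (bCount y z (k * L.length) (ℓ ^ k) : ℝ) * (L.length.factorial : ℝ) ^ k
        = ((bCount y z (k * L.length) (ℓ ^ k) * (L.length.factorial) ^ k : ℕ) : ℝ) := by
          push_cast; ring
      _ ≤ (((k * L.length).factorial * bCount y z L.length ℓ ^ k : ℕ) : ℝ) := by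
          exact_mod_cast hnat
      _ = ((k * L.length).factorial : ℝ) * (bCount y z L.length ℓ : ℝ) ^ k := by push_cast; ring
  · -- some prime factor out of range: LHS is zero
    push_neg at hgood
    obtain ⟨p, hpL, hbad⟩ := hgood
    have h0 : bCount y z (k * L.length) (ℓ ^ k) = 0 := by
      rw [bCount]
      rw [Nat.card_eq_zero]
      left
      constructor
      rintro ⟨t, ht, htprod⟩
      have hp' : p ∈ (ℓ ^ k).primeFactorsList := by
        rw [Nat.mem_primeFactorsList (pow_ne_zero k hℓ.ne')]
        refine ⟨Nat.prime_of_mem_primeFactorsList hpL, ?_⟩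
        exact dvd_pow (Nat.dvd_of_mem_primeFactorsList hpL) (by omega)
      have htperm : (List.ofFn t).Perm (ℓ ^ k).primeFactorsList :=
        Nat.primeFactorsList_unique (by rw [List.prod_ofFn]; exact htprod)
          (by intro q hq; obtain ⟨i, rfl⟩ := List.mem_ofFn.1 hq; exact (ht i).1)
      obtain ⟨i, rfl⟩ := List.mem_ofFn.1 (htperm.symm.mem_iff.1 hp')
      exact absurd (ht i).2.2 (not_lt.2 (hbad (ht i).2.1))
    rw [h0]
    push_cast
    positivity
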